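/- Let A be a commutative ℚ-algebra and let δ₁, …, δ_{l} be derivations of A. Define, for each multi-index J in the set J'_l = {(j₁,…,j_{l-1}) ∈ ℕ^{l-1} : ∑_{i=1}^{l-1} i·j_i = l}, the operator D_J := δ₁^{j₁} ∘ ⋯ ∘ δ_{l-1}^{j_{l-1}} with weight w_J := l! / (2!^{j₂} ⋯ (l-1)!^{j_{l-1}} · j₁! ⋯ j_{l-1}!). Then for every f ∈ A: ∑_{J ∈ J'_l} w_J · D_J(f²) = 2 f ∑_{J ∈ J'_l} w_J · D_J(f) + ∑_{k=1}^{l-1} C(l,k) (∑_{J ∈ J_k} w'_{J,k} D_J f)(∑_{J ∈ J_{l-k}} w'_{J,l-k} D_J f), where J_k = {(j₁,…,j_k) : ∑ i j_i = k} and w'_{J,k} = k!/(2!^{j₂}⋯k!^{j_k} j₁!⋯j_k!). -/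

import Mathlib

/-- The finite set of multi-indices `(j₁,…,j_m) ∈ ℕ^m` with `∑_{i=1}^m i·j_i = t`
(here `j i` encodes `j_{i+1}`). -/
noncomputable def multiIdx (m t : ℕ) : Finset (Fin m → ℕ) :=
  Finset.filter (fun j => ∑ i, (i.1 + 1) * j i = t)
    (Fintype.piFinset fun _ : Fin m => Finset.range (t + 1))

/-- The ordered operator `D_J = δ₁^{j₁} ∘ δ₂^{j₂} ∘ ⋯ ∘ δ_m^{j_m}` applied to `f`
(with `δ₁` outermost). -/
noncomputable def Dapp {A : Type*} [CommRing A] [Algebra ℚ A]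
    (δ : ℕ → Derivation ℚ A A) (m : ℕ) (j : Fin m → ℕ) (f : A) : A :=
  (List.finRange m).foldr (fun i acc => (⇑(δ i.1))^[j i] acc) f

/-- The weight denominator `1!^{j₁} 2!^{j₂} ⋯ m!^{j_m} · j₁! ⋯ j_m!`. -/
noncomputable def wdenom (m : ℕ) (j : Fin m → ℕ) : ℚ :=
  ∏ i : Fin m, (Nat.factorial (i.1 + 1) ^ j i * Nat.factorial (j i) : ℚ)


open Finset

section Aux
variable {A : Type*} [CommRing A] [Algebra ℚ A]

noncomputable def DappL (δ : ℕ → Derivation ℚ A A) (m : ℕ) (j : Fin m → ℕ) : A →ₗ[ℚ] A :=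
  (List.finRange m).foldr (fun i acc => ((δ i.1).toLinearMap ^ (j i)) ∘ₗ acc) LinearMap.id

lemma Dapp_eq (δ : ℕ → Derivation ℚ A A) (m : ℕ) (j : Fin m → ℕ) (f : A) :
    Dapp δ m j f = DappL δ m j f := by
  unfold Dapp DappL
  induction (List.finRange m) with
  | nil => simp
  | cons i L ih => simp [ih, Module.End.pow_apply]

lemma Dapp_succ (δ : ℕ → Derivation ℚ A A) (m : ℕ) (j : Fin (m+1) → ℕ) (f : A) :
    Dapp δ (m+1) j f
      = (⇑(δ 0))^[j 0] (Dapp (fun n => δ (n+1)) m (fun i => j i.succ) f) := by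
  unfold Dapp
  rw [List.finRange_succ, List.foldr_cons, List.foldr_map]
  rfl

lemma Dapp_castSucc (δ : ℕ → Derivation ℚ A A) (m : ℕ) (j : Fin (m+1) → ℕ) (f : A) :
    Dapp δ (m+1) j f
      = Dapp δ m (fun i => j i.castSucc) ((⇑(δ m))^[j (Fin.last m)] f) := by
  unfold Dapp
  rw [List.finRange_succ_last, List.foldr_append, List.foldr_map]
  rfl

lemma Dapp_zero (δ : ℕ → Derivation ℚ A A) (m : ℕ) (f : A) :
    Dapp δ m (fun _ => 0) f = f := by
  unfold Dapp
  induction (List.finRange m) with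
  | nil => rfl
  | cons i L ih => simp [ih]

lemma iter_leibniz (d : Derivation ℚ A A) (n : ℕ) (f g : A) :
    (⇑d)^[n] (f * g)
      = ∑ k ∈ range (n+1), n.choose k • ((⇑d)^[n-k] f * (⇑d)^[k] g) := by
  induction n with
  | zero => simp
  | succ n IH =>
    calc
      (⇑d)^[n + 1] (f * g) =
          d (∑ k ∈ range n.succ, n.choose k • ((⇑d)^[n - k] f * (⇑d)^[k] g)) := by
        rw [Function.iterate_succ_apply', IH]
      _ = (∑ k ∈ range n.succ,
            n.choose k • ((⇑d)^[n - k + 1] f * (⇑d)^[k] g)) +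
          ∑ k ∈ range n.succ,
            n.choose k • ((⇑d)^[n - k] f * (⇑d)^[k + 1] g) := by
        rw [map_sum]
        simp_rw [map_nsmul, Derivation.leibniz, smul_eq_mul, smul_add, sum_add_distrib,
          Function.iterate_succ_apply']
        rw [add_comm]
        congr 1 <;> refine sum_congr rfl fun k hk => ?_ <;> ring_nf
      _ = (∑ k ∈ range n.succ,
                n.choose k.succ • ((⇑d)^[n - k] f * (⇑d)^[k + 1] g)) +
              1 • ((⇑d)^[n + 1] f * (⇑d)^[0] g) +
            ∑ k ∈ range n.succ, n.choose k • ((⇑d)^[n - k] f * (⇑d)^[k + 1] g) := ?_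
      _ = ((∑ k ∈ range n.succ, n.choose k • ((⇑d)^[n - k] f * (⇑d)^[k + 1] g)) +
              ∑ k ∈ range n.succ,
                n.choose k.succ • ((⇑d)^[n - k] f * (⇑d)^[k + 1] g)) +
            1 • ((⇑d)^[n + 1] f * (⇑d)^[0] g) := by
        rw [add_comm, add_assoc]
      _ = (∑ i ∈ range n.succ,
              (n + 1).choose (i + 1) • ((⇑d)^[n + 1 - (i + 1)] f * (⇑d)^[i + 1] g)) +
            1 • ((⇑d)^[n + 1] f * (⇑d)^[0] g) := by
        simp_rw [Nat.choose_succ_succ, Nat.succ_sub_succ, add_smul, sum_add_distrib]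
      _ = ∑ k ∈ range n.succ.succ,
            n.succ.choose k • ((⇑d)^[n.succ - k] f * (⇑d)^[k] g) := by
        rw [sum_range_succ' _ n.succ, Nat.choose_zero_right, tsub_zero]
    congr
    refine (sum_range_succ' _ _).trans (congr_arg₂ (· + ·) ?_ ?_)
    · rw [sum_range_succ, Nat.choose_succ_self, zero_smul, add_zero]
      refine sum_congr rfl fun k hk => ?_
      rw [mem_range] at hk
      congr
      omega
    · rw [Nat.choose_zero_right, tsub_zero]


lemma Dapp_sum {ι : Type*} (δ : ℕ → Derivation ℚ A A) (m : ℕ) (j : Fin m → ℕ)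
    (s : Finset ι) (F : ι → A) :
    Dapp δ m j (∑ x ∈ s, F x) = ∑ x ∈ s, Dapp δ m j (F x) := by
  simp only [Dapp_eq]; exact map_sum _ _ _

lemma Dapp_nsmul (δ : ℕ → Derivation ℚ A A) (m : ℕ) (j : Fin m → ℕ) (n : ℕ) (f : A) :
    Dapp δ m j (n • f) = n • Dapp δ m j f := by
  simp only [Dapp_eq]; exact map_nsmul _ _ _

lemma sum_piFinset_succ {M : Type*} [AddCommMonoid M] (n : ℕ) (s : Fin (n+1) → Finset ℕ)
    (F : (Fin (n+1) → ℕ) → M) :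
    ∑ r ∈ Fintype.piFinset s, F r
      = ∑ a ∈ s 0, ∑ r ∈ Fintype.piFinset (fun i => s i.succ), F (Fin.cons a r) := by
  rw [← Finset.sum_product']
  refine Finset.sum_nbij' (fun r => (r 0, Fin.tail r)) (fun p => Fin.cons p.1 p.2)
    ?_ ?_ ?_ ?_ ?_
  · intro r hr
    rw [Fin.mem_piFinset_iff_zero_tail] at hr
    simpa [Finset.mem_product, Fin.tail] using hr
  · intro p hp
    rw [Finset.mem_product] at hp
    rw [Fin.mem_piFinset_iff_zero_tail]
    simpa [Fin.tail_cons, Fin.tail] using hp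
  · intro r _; exact Fin.cons_self_tail r
  · intro p _; simp [Fin.tail_cons]
  · intro r _; rw [Fin.cons_self_tail]


lemma iter_coe (d : Derivation ℚ A A) (n : ℕ) :
    (⇑d)^[n] = ⇑(d.toLinearMap ^ n) :=
  funext fun x => (Module.End.pow_apply _ _ _).symm

lemma iter_sum {ι : Type*} (d : Derivation ℚ A A) (n : ℕ) (s : Finset ι) (F : ι → A) :
    (⇑d)^[n] (∑ x ∈ s, F x) = ∑ x ∈ s, (⇑d)^[n] (F x) := by
  rw [iter_coe]; exact map_sum _ _ _

lemma iter_nsmul (d : Derivation ℚ A A) (n c : ℕ) (f : A) :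
    (⇑d)^[n] (c • f) = c • (⇑d)^[n] f := by
  rw [iter_coe]; exact map_nsmul _ _ _

lemma iter_leibniz' (d : Derivation ℚ A A) (n : ℕ) (f g : A) :
    (⇑d)^[n] (f * g)
      = ∑ k ∈ range (n+1), n.choose k • ((⇑d)^[k] f * (⇑d)^[n-k] g) := by
  have h := Finset.sum_range_reflect
    (fun k => n.choose k • ((⇑d)^[n-k] f * (⇑d)^[k] g)) (n+1)
  rw [iter_leibniz, ← h]
  refine sum_congr rfl fun k hk => ?_
  rw [mem_range] at hk
  have h1 : n + 1 - 1 - k = n - k := by omega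
  rw [h1, Nat.choose_symm (by omega), Nat.sub_sub_self (by omega)]

lemma Dapp_mul (δ : ℕ → Derivation ℚ A A) (m : ℕ) (j : Fin m → ℕ) (f g : A) :
    Dapp δ m j (f * g)
      = ∑ r ∈ Fintype.piFinset (fun i => Finset.range (j i + 1)),
          (∏ i, (j i).choose (r i)) •
            (Dapp δ m r f * Dapp δ m (fun i => j i - r i) g) := by
  induction m generalizing δ with
  | zero =>
    rw [Fintype.piFinset_of_isEmpty, Fintype.sum_unique]
    simp [Dapp]
  | succ m ih =>
    rw [Dapp_succ, ih, iter_sum,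
      sum_piFinset_succ m (fun i => range (j i + 1)), Finset.sum_comm]
    refine sum_congr rfl fun r hr => ?_
    rw [iter_nsmul, iter_leibniz', smul_sum]
    refine sum_congr rfl fun a ha => ?_
    rw [smul_smul]
    simp only [Dapp_succ, Fin.cons_zero, Fin.cons_succ, Fin.prod_univ_succ]
    rw [mul_comm]

lemma mem_multiIdx_of_sum {m t : ℕ} {j : Fin m → ℕ} (h : ∑ i, (i.1+1) * j i = t) :
    j ∈ multiIdx m t := by
  unfold multiIdx
  rw [mem_filter]
  refine ⟨?_, h⟩
  rw [Fintype.mem_piFinset]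
  intro i
  rw [mem_range]
  have h1 : (i.1+1) * j i ≤ t := by
    rw [← h]
    exact Finset.single_le_sum (f := fun i => (i.1+1) * j i) (fun _ _ => Nat.zero_le _)
      (mem_univ i)
  have h2 : j i ≤ (i.1+1) * j i := Nat.le_mul_of_pos_left _ (Nat.succ_pos _)
  omega

lemma sum_of_mem_multiIdx {m t : ℕ} {j : Fin m → ℕ} (h : j ∈ multiIdx m t) :
    ∑ i, (i.1+1) * j i = t := (Finset.mem_filter.mp h).2

lemma wdenom_ne_zero (m : ℕ) (j : Fin m → ℕ) : wdenom m j ≠ 0 := by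
  unfold wdenom
  refine Finset.prod_ne_zero_iff.mpr fun i _ => ?_
  positivity

lemma wdenom_split {m : ℕ} (j r : Fin m → ℕ) (hr : ∀ i, r i ≤ j i) :
    wdenom m r * wdenom m (fun i => j i - r i) * (∏ i, ((j i).choose (r i) : ℚ))
      = wdenom m j := by
  unfold wdenom
  rw [← Finset.prod_mul_distrib, ← Finset.prod_mul_distrib]
  refine Finset.prod_congr rfl fun i _ => ?_
  have h := Nat.choose_mul_factorial_mul_factorial (hr i)
  have h2 : (r i) + (j i - r i) = j i := Nat.add_sub_cancel' (hr i)
  have h3 : ((((i:ℕ)+1).factorial : ℚ)) ^ j i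
      = (((i:ℕ)+1).factorial : ℚ) ^ r i * (((i:ℕ)+1).factorial : ℚ) ^ (j i - r i) := by
    rw [← pow_add, h2]
  push_cast [← h]
  rw [h3]
  ring

lemma weight_eq {m t k : ℕ} (j r : Fin m → ℕ) (hr : ∀ i, r i ≤ j i)
    (hj : ∑ i, (i.1+1) * j i = t) (hk : ∑ i, (i.1+1) * r i = k) :
    ((t.factorial : ℚ)/wdenom m j) * (∏ i, ((j i).choose (r i) : ℚ))
      = (t.choose k : ℚ) * ((k.factorial : ℚ)/wdenom m r)
        * (((t-k).factorial : ℚ)/wdenom m (fun i => j i - r i)) := by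
  have hkt : k ≤ t := by
    rw [← hj, ← hk]
    exact Finset.sum_le_sum fun i _ => Nat.mul_le_mul_left _ (hr i)
  have hfac : (t.choose k : ℚ) * k.factorial * (t-k).factorial = t.factorial := by
    exact_mod_cast congrArg (Nat.cast (R := ℚ))
      (Nat.choose_mul_factorial_mul_factorial hkt)
  have hw := wdenom_split j r hr
  have h1 := wdenom_ne_zero m r
  have h2 := wdenom_ne_zero m (fun i => j i - r i)
  have h3 := wdenom_ne_zero m j
  field_simp
  rw [← hw, ← hfac]
  ring

lemma sum_sub_distrib {m : ℕ} (j r : Fin m → ℕ) (hr : ∀ i, r i ≤ j i) :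
    ∑ i, (i.1+1) * (j i - r i) = (∑ i, (i.1+1) * j i) - (∑ i, (i.1+1) * r i) := by
  have h : ∑ i, ((i.1+1) * (j i - r i) + (i.1+1) * r i) = ∑ i, (i.1+1) * j i := by
    refine Finset.sum_congr rfl fun i _ => ?_
    rw [← Nat.mul_add, Nat.sub_add_cancel (hr i)]
  rw [Finset.sum_add_distrib] at h
  have h2 : ∑ i, (i.1+1) * r i ≤ ∑ i, (i.1+1) * j i :=
    Finset.sum_le_sum fun i _ => Nat.mul_le_mul_left _ (hr i)
  omega

lemma conv (δ : ℕ → Derivation ℚ A A) (m t : ℕ) (f g : A) :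
    (∑ j ∈ multiIdx m t, ((t.factorial : ℚ)/wdenom m j) • Dapp δ m j (f * g))
    = ∑ k ∈ range (t+1), (t.choose k : ℚ) •
        ((∑ r ∈ multiIdx m k, ((k.factorial : ℚ)/wdenom m r) • Dapp δ m r f) *
         (∑ s ∈ multiIdx m (t-k), (((t-k).factorial : ℚ)/wdenom m s) • Dapp δ m s g)) := by
  simp only [Dapp_mul, Finset.smul_sum, Finset.sum_mul_sum, ← Finset.sum_product']
  rw [Finset.sum_sigma', Finset.sum_sigma']
  refine Finset.sum_nbij'
    (fun p => ⟨∑ i, (i.1+1) * p.2 i, (p.2, fun i => p.1 i - p.2 i)⟩)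
    (fun q => ⟨fun i => q.2.1 i + q.2.2 i, q.2.1⟩) ?_ ?_ ?_ ?_ ?_
  · rintro ⟨j, r⟩ hp
    simp only [Finset.mem_sigma, Fintype.mem_piFinset, mem_range] at hp
    obtain ⟨hj, hrp⟩ := hp
    have hrj : ∀ i, r i ≤ j i := fun i => by have := hrp i; omega
    have hjt := sum_of_mem_multiIdx hj
    have hkt : (∑ i, (i.1+1) * r i) ≤ t := by
      rw [← hjt]; exact Finset.sum_le_sum fun i _ => Nat.mul_le_mul_left _ (hrj i)
    simp only [Finset.mem_sigma, Finset.mem_product, mem_range]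
    exact ⟨by omega, mem_multiIdx_of_sum rfl,
      mem_multiIdx_of_sum (by rw [sum_sub_distrib j r hrj, hjt])⟩
  · rintro ⟨k, r, s⟩ hq
    simp only [Finset.mem_sigma, Finset.mem_product, mem_range] at hq
    obtain ⟨hk, hr, hs⟩ := hq
    have hrk := sum_of_mem_multiIdx hr
    have hst := sum_of_mem_multiIdx hs
    simp only [Finset.mem_sigma, Fintype.mem_piFinset, mem_range]
    constructor
    · refine mem_multiIdx_of_sum ?_
      simp only [Nat.mul_add]
      rw [Finset.sum_add_distrib, hrk, hst]
      omega
    · intro i; omega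
  · rintro ⟨j, r⟩ hp
    simp only [Finset.mem_sigma, Fintype.mem_piFinset, mem_range] at hp
    obtain ⟨hj, hrp⟩ := hp
    have hrj : ∀ i, r i ≤ j i := fun i => by have := hrp i; omega
    have h1 : (fun i => r i + (j i - r i)) = j := funext fun i => Nat.add_sub_cancel' (hrj i)
    dsimp only
    rw [h1]
  · rintro ⟨k, r, s⟩ hq
    simp only [Finset.mem_sigma, Finset.mem_product, mem_range] at hq
    obtain ⟨hk, hr, hs⟩ := hq
    have hrk := sum_of_mem_multiIdx hr
    have h1 : (fun i => r i + s i - r i) = s := funext fun i => by omega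
    dsimp only
    rw [h1, hrk]
  · rintro ⟨j, r⟩ hp
    simp only [Finset.mem_sigma, Fintype.mem_piFinset, mem_range] at hp
    obtain ⟨hj, hrp⟩ := hp
    have hrj : ∀ i, r i ≤ j i := fun i => by have := hrp i; omega
    have hjt := sum_of_mem_multiIdx hj
    dsimp only
    have hcast : ((∏ i, (j i).choose (r i)) : ℕ) •
        (Dapp δ m r f * Dapp δ m (fun i => j i - r i) g)
        = ((∏ i, ((j i).choose (r i) : ℚ))) •
          (Dapp δ m r f * Dapp δ m (fun i => j i - r i) g) := by
      rw [← Nat.cast_prod, Nat.cast_smul_eq_nsmul]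
    rw [hcast, smul_smul, weight_eq j r hrj hjt rfl]
    rw [smul_mul_smul_comm, smul_smul, mul_assoc]

lemma wdenom_castSucc (m : ℕ) (j : Fin (m+1) → ℕ) (h : j (Fin.last m) = 0) :
    wdenom (m+1) j = wdenom m (fun i => j i.castSucc) := by
  unfold wdenom
  rw [Fin.prod_univ_castSucc, h]
  simp

lemma drop (δ : ℕ → Derivation ℚ A A) (m t : ℕ) (f : A) :
    ∑ j ∈ (multiIdx (m+1) t).filter (fun j => j (Fin.last m) = 0),
        ((t.factorial : ℚ)/wdenom (m+1) j) • Dapp δ (m+1) j f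
      = ∑ j ∈ multiIdx m t, ((t.factorial : ℚ)/wdenom m j) • Dapp δ m j f := by
  refine Finset.sum_nbij' (fun j => fun i => j i.castSucc)
    (fun j => Fin.snoc j 0) ?_ ?_ ?_ ?_ ?_
  · intro j hj
    rw [Finset.mem_filter] at hj
    obtain ⟨hj, hlast⟩ := hj
    have hs := sum_of_mem_multiIdx hj
    rw [Fin.sum_univ_castSucc, hlast, Nat.mul_zero, Nat.add_zero] at hs
    exact mem_multiIdx_of_sum hs
  · intro j hj
    have hs := sum_of_mem_multiIdx hj
    rw [Finset.mem_filter]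
    refine ⟨mem_multiIdx_of_sum ?_, by simp⟩
    rw [Fin.sum_univ_castSucc]
    simp only [Fin.snoc_castSucc, Fin.snoc_last, Nat.mul_zero, Nat.add_zero]
    exact hs
  · intro j hj
    rw [Finset.mem_filter] at hj
    obtain ⟨_, hlast⟩ := hj
    show Fin.snoc (fun i => j i.castSucc) 0 = j
    have : (fun i => j i.castSucc) = Fin.init j := rfl
    rw [this, ← hlast]
    exact Fin.snoc_init_self j
  · intro j hj
    funext i
    simp [Fin.snoc_castSucc]
  · intro j hj
    rw [Finset.mem_filter] at hj
    obtain ⟨_, hlast⟩ := hj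
    rw [wdenom_castSucc m j hlast, Dapp_castSucc, hlast]
    simp

lemma restrict (δ : ℕ → Derivation ℚ A A) (t : ℕ) (f : A) :
    ∀ m, t ≤ m →
    ∑ j ∈ multiIdx m t, ((t.factorial : ℚ)/wdenom m j) • Dapp δ m j f
      = ∑ j ∈ multiIdx t t, ((t.factorial : ℚ)/wdenom t j) • Dapp δ t j f := by
  refine Nat.le_induction rfl ?_
  intro m hm IH
  have hall : ∀ j ∈ multiIdx (m+1) t, j (Fin.last m) = 0 := by
    intro j hj
    have hs := sum_of_mem_multiIdx hj
    have h1 : ((Fin.last m).1 + 1) * j (Fin.last m) ≤ t := by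
      rw [← hs]
      exact Finset.single_le_sum (f := fun i => (i.1+1) * j i)
        (fun _ _ => Nat.zero_le _) (Finset.mem_univ _)
    simp only [Fin.val_last] at h1
    nlinarith [Nat.zero_le (j (Fin.last m))]
  rw [← Finset.filter_true_of_mem hall, drop, IH]

lemma sum_multiIdx_zero (δ : ℕ → Derivation ℚ A A) (m : ℕ) (f : A) :
    ∑ j ∈ multiIdx m 0, ((Nat.factorial 0 : ℚ)/wdenom m j) • Dapp δ m j f = f := by
  have he : multiIdx m 0 = {fun _ => 0} := by
    ext j
    simp only [multiIdx, Finset.mem_filter, Fintype.mem_piFinset, Finset.mem_range,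
      Finset.mem_singleton, Nat.lt_one_iff]
    constructor
    · rintro ⟨h1, _⟩; exact funext fun i => by have := h1 i; omega
    · rintro rfl; simp
  rw [he, Finset.sum_singleton, Dapp_zero]
  have hw : wdenom m (fun _ => 0) = 1 := by simp [wdenom]
  rw [hw]
  norm_num

lemma split (δ : ℕ → Derivation ℚ A A) (m : ℕ) (f : A) :
    ∑ j ∈ multiIdx (m+1) (m+1), (((m+1).factorial : ℚ)/wdenom (m+1) j) • Dapp δ (m+1) j f
      = (∑ j ∈ multiIdx m (m+1), (((m+1).factorial : ℚ)/wdenom m j) • Dapp δ m j f)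
        + δ m f := by
  classical
  rw [← Finset.sum_filter_add_sum_filter_not (multiIdx (m+1) (m+1))
    (fun j => j (Fin.last m) = 0), drop]
  congr 1
  have he : (multiIdx (m+1) (m+1)).filter (fun j => ¬ j (Fin.last m) = 0)
      = {Fin.snoc (fun _ => 0) 1} := by
    ext j
    rw [Finset.mem_filter, Finset.mem_singleton]
    constructor
    · rintro ⟨hj, hlast⟩
      have hs := sum_of_mem_multiIdx hj
      rw [Fin.sum_univ_castSucc] at hs
      simp only [Fin.val_last, Fin.coe_castSucc] at hs
      have h1 : j (Fin.last m) = 1 := by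
        rcases Nat.lt_or_ge (j (Fin.last m)) 2 with h | h
        · omega
        · exfalso
          have h5 : (m+1) * 2 ≤ (m+1) * j (Fin.last m) := Nat.mul_le_mul_left _ h
          omega
      have h2 : ∑ i : Fin m, ((i : ℕ) + 1) * j i.castSucc = 0 := by
        rw [h1] at hs; omega
      have h3 : ∀ i : Fin m, j i.castSucc = 0 := by
        intro i
        have h6 := (Finset.sum_eq_zero_iff.mp h2) i (Finset.mem_univ i)
        exact (Nat.mul_eq_zero.mp h6).resolve_left (by omega)
      funext i
      refine Fin.lastCases ?_ ?_ i
      · rw [h1, Fin.snoc_last]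
      · intro i; rw [h3 i, Fin.snoc_castSucc]
    · rintro rfl
      constructor
      · refine mem_multiIdx_of_sum ?_
        rw [Fin.sum_univ_castSucc]
        simp [Fin.snoc_castSucc, Fin.snoc_last]
      · simp [Fin.snoc_last]
  rw [he, Finset.sum_singleton]
  have hw : wdenom (m+1) (Fin.snoc (fun _ => 0) 1) = ((m+1).factorial : ℚ) := by
    unfold wdenom
    rw [Fin.prod_univ_castSucc]
    simp [Fin.snoc_castSucc, Fin.snoc_last]
  rw [hw, div_self (by exact_mod_cast (m+1).factorial_ne_zero), one_smul,
    Dapp_castSucc]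
  simp only [Fin.snoc_castSucc, Fin.snoc_last, Function.iterate_one]
  exact Dapp_zero δ m _

lemma sum_multiIdx_zero' (δ : ℕ → Derivation ℚ A A) (m : ℕ) (f : A) :
    ∑ j ∈ multiIdx m 0, ((1 : ℚ)/wdenom m j) • Dapp δ m j f = f := by
  have := sum_multiIdx_zero δ m f
  simpa using this

end Aux

lemma main_aux {A : Type*} [CommRing A] [Algebra ℚ A]
    (m : ℕ) (δ : ℕ → Derivation ℚ A A) (f : A) :
    (∑ j ∈ multiIdx m (m+1),
        ((Nat.factorial (m+1) : ℚ) / wdenom m j) • Dapp δ m j (f ^ 2)) =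
    2 * f * (∑ j ∈ multiIdx m (m+1),
        ((Nat.factorial (m+1) : ℚ) / wdenom m j) • Dapp δ m j f) +
    ∑ k ∈ Finset.Ico 1 (m+1), ((m+1).choose k : ℚ) •
      ((∑ j ∈ multiIdx k k,
          ((Nat.factorial k : ℚ) / wdenom k j) • Dapp δ k j f) *
       (∑ j ∈ multiIdx (m+1-k) (m+1-k),
          ((Nat.factorial (m+1-k) : ℚ) / wdenom (m+1-k) j) • Dapp δ (m+1-k) j f)) := by
  simp only [pow_two]
  have hconv := conv δ (m+1) (m+1) f f
  rw [Finset.sum_range_succ] at hconv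
  rw [Finset.sum_range_succ'] at hconv
  simp only [Nat.choose_zero_right, Nat.choose_self, Nat.cast_one, one_smul, Nat.sub_self,
    Nat.sub_zero, Nat.factorial_zero] at hconv
  rw [sum_multiIdx_zero' δ (m+1) f] at hconv
  rw [split δ m (f*f), split δ m f] at hconv
  have hle : δ m (f * f) = f * δ m f + f * δ m f := by
    rw [Derivation.leibniz]; simp [smul_eq_mul]
  rw [Finset.sum_Ico_eq_sum_range]
  simp only [Nat.add_sub_cancel]
  have hmid : ∀ i ∈ Finset.range m,
      ((m+1).choose (1+i) : ℚ) •
        ((∑ j ∈ multiIdx (1+i) (1+i),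
            (((1+i).factorial : ℚ) / wdenom (1+i) j) • Dapp δ (1+i) j f) *
         (∑ j ∈ multiIdx (m+1-(1+i)) (m+1-(1+i)),
            (((m+1-(1+i)).factorial : ℚ) / wdenom (m+1-(1+i)) j) • Dapp δ (m+1-(1+i)) j f))
      = ((m+1).choose (i+1) : ℚ) •
        ((∑ r ∈ multiIdx (m+1) (i+1),
            (((i+1).factorial : ℚ) / wdenom (m+1) r) • Dapp δ (m+1) r f) *
         (∑ s ∈ multiIdx (m+1) (m+1-(i+1)),
            (((m+1-(i+1)).factorial : ℚ) / wdenom (m+1) s) • Dapp δ (m+1) s f)) := by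
    intro i hi
    rw [Finset.mem_range] at hi
    have h1 : 1 + i = i + 1 := by omega
    rw [h1]
    rw [restrict δ (i+1) f (m+1) (by omega), restrict δ (m+1-(i+1)) f (m+1) (by omega)]
  rw [Finset.sum_congr rfl hmid]
  linear_combination hconv - hle

/-- Equation (A.3) of the Appendix: the combinatorial identity, for derivations
`δ₁, …, δ_{l-1}` of a commutative ℚ-algebra, relating the weighted sums of
`D_J(f²)` over `J'_l` to those of `D_J f` over `J_k` and `J_{l-k}`. -/
theorem appendix_combinatorial_identity {A : Type*} [CommRing A] [Algebra ℚ A]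
    (l : ℕ) (hl : 1 ≤ l) (δ : ℕ → Derivation ℚ A A) (f : A) :
    (∑ j ∈ multiIdx (l - 1) l,
        ((Nat.factorial l : ℚ) / wdenom (l - 1) j) • Dapp δ (l - 1) j (f ^ 2)) =
    2 * f * (∑ j ∈ multiIdx (l - 1) l,
        ((Nat.factorial l : ℚ) / wdenom (l - 1) j) • Dapp δ (l - 1) j f) +
    ∑ k ∈ Finset.Ico 1 l, (l.choose k : ℚ) •
      ((∑ j ∈ multiIdx k k,
          ((Nat.factorial k : ℚ) / wdenom k j) • Dapp δ k j f) *
       (∑ j ∈ multiIdx (l - k) (l - k),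
          ((Nat.factorial (l - k) : ℚ) / wdenom (l - k) j) • Dapp δ (l - k) j f)) := by
  obtain ⟨m, rfl⟩ : ∃ m, l = m + 1 := ⟨l - 1, by omega⟩
  exact main_aux m δ f
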